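/- For a Tamari interval I1 = [P1,Q1] of size n1 with a distinguished contact splitting P1 = P1^ℓ P1^r into two Dyck paths, the pair [u P1^ℓ d P1^r, u Q1 d] is a Tamari interval of size n1+1. -/

import Mathlib

/-- A step of a Dyck path: `u` (up) or `d` (down). -/
inductive Step where
  | u : Step
  | d : Step
deriving DecidableEq, Repr

open Step

/-- Number of up steps of a word. -/
def countU (w : List Step) : ℕ := w.count u

/-- Number of down steps of a word. -/
def countD (w : List Step) : ℕ := w.count d

/-- A word over {u,d} is a Dyck path if it has as many u's as d's and
every prefix has at least as many u's as d's. -/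
def IsDyck (w : List Step) : Prop :=
  countU w = countD w ∧ ∀ p : List Step, p <+: w → countD p ≤ countU p

/-- Number of occurrences of the two-letter factor `ab` in `w`. -/
def pairCount (a b : Step) (w : List Step) : ℕ := (w.zip w.tail).count (a, b)

/-- The right-rotation covering relation of the Tamari lattice:
`P = V d P1 W` is turned into `P' = V P1 d W` where `P1` is a non-empty
Dyck path. -/
def Rotation (P P' : List Step) : Prop :=
  ∃ V W P1 : List Step, IsDyck P1 ∧ P1 ≠ [] ∧
    P = V ++ [Step.d] ++ P1 ++ W ∧ P' = V ++ P1 ++ [Step.d] ++ W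

/-- The Tamari order: reflexive-transitive closure of right rotation. -/
def Tamari : List Step → List Step → Prop := Relation.ReflTransGen Rotation

lemma prefix_split {p A B : List Step} (h : p <+: A ++ B) :
    p <+: A ∨ ∃ r, r <+: B ∧ p = A ++ r := by
  rcases le_or_gt p.length A.length with hle | hlt
  · left; exact List.prefix_of_prefix_length_le h (List.prefix_append A B) hle
  · right
    have hA : A <+: p := List.prefix_of_prefix_length_le (List.prefix_append A B) h hlt.le
    obtain ⟨r, rfl⟩ := hA
    refine ⟨r, ?_, rfl⟩
    rcases h with ⟨t, ht⟩
    rw [List.append_assoc] at ht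
    exact ⟨t, List.append_cancel_left ht⟩

lemma countU_append (a b : List Step) : countU (a ++ b) = countU a + countU b :=
  List.count_append ..

lemma countD_append (a b : List Step) : countD (a ++ b) = countD a + countD b :=
  List.count_append ..

lemma dyck_glue {A B : List Step} (hA : IsDyck A) (hB : IsDyck B) :
    IsDyck ([Step.u] ++ A ++ [Step.d] ++ B) := by
  constructor
  · have hA1 := hA.1
    have hB1 := hB.1
    simp [countU, countD, List.count_append] at hA1 hB1 ⊢
    omega
  · intro p hp
    rw [List.append_assoc, List.append_assoc] at hp
    rcases prefix_split hp with h1 | ⟨q, hq, rfl⟩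
    · have := h1.sublist.count_le Step.d
      simp [countD, countU] at this ⊢
      omega
    · rcases prefix_split hq with h2 | ⟨r, hr, rfl⟩
      · have h3 := hA.2 q h2
        simp [countD, countU, List.count_append] at h3 ⊢
        omega
      · rcases prefix_split hr with h3 | ⟨s, hs, rfl⟩
        · have h4 := h3.sublist.count_le Step.d
          simp [countD, countU, List.count_append] at h4 ⊢
          have := hA.1
          simp [countU, countD] at this
          omega
        · have h5 := hB.2 s hs
          have := hA.1
          simp [countU, countD] at this
          simp [countD, countU, List.count_append] at h5 ⊢
          omega

lemma rotation_lift {P P' : List Step} (h : Rotation P P') :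
    Rotation ([Step.u] ++ P ++ [Step.d]) ([Step.u] ++ P' ++ [Step.d]) := by
  obtain ⟨V, W, X, hX, hne, rfl, rfl⟩ := h
  exact ⟨[Step.u] ++ V, W ++ [Step.d], X, hX, hne, by simp, by simp⟩

lemma tamari_lift {P P' : List Step} (h : Tamari P P') :
    Tamari ([Step.u] ++ P ++ [Step.d]) ([Step.u] ++ P' ++ [Step.d]) :=
  Relation.ReflTransGen.lift (fun P => [Step.u] ++ P ++ [Step.d]) (fun _ _ hr => rotation_lift hr) _ _ h

/-- Augmentation of Tamari intervals: if `[P1,Q1]` is a Tamari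
interval of size `n1` and a distinguished contact splits `P1 = P1ℓ P1r` into
two Dyck paths, then `[u P1ℓ d P1r, u Q1 d]` is a Tamari interval of size
`n1 + 1`. -/
theorem interval_augment (n1 : ℕ) (P1 Q1 P1l P1r : List Step)
    (hP1 : IsDyck P1) (hQ1 : IsDyck Q1)
    (hn1 : countU P1 = n1) (hn1' : countU Q1 = n1)
    (hPQ : Tamari P1 Q1)
    (hsplit : P1 = P1l ++ P1r) (hl : IsDyck P1l) (hr : IsDyck P1r) :
    IsDyck ([Step.u] ++ P1l ++ [Step.d] ++ P1r) ∧
    IsDyck ([Step.u] ++ Q1 ++ [Step.d]) ∧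
    countU ([Step.u] ++ P1l ++ [Step.d] ++ P1r) = n1 + 1 ∧
    Tamari ([Step.u] ++ P1l ++ [Step.d] ++ P1r) ([Step.u] ++ Q1 ++ [Step.d]) := by
  subst hsplit
  refine ⟨dyck_glue hl hr, ?_, ?_, ?_⟩
  · have := dyck_glue hQ1 (⟨rfl, by intro p hp; simp [List.prefix_nil] at hp; simp [hp, countU, countD]⟩ : IsDyck ([] : List Step))
    simpa using this
  · simp [countU_append, countU] at hn1 ⊢
    omega
  · have step1 : Tamari ([Step.u] ++ P1l ++ [Step.d] ++ P1r)
        ([Step.u] ++ (P1l ++ P1r) ++ [Step.d]) := by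
      rcases eq_or_ne P1r [] with rfl | hne
      · have he : ([Step.u] ++ P1l ++ [Step.d] ++ ([] : List Step)) = ([Step.u] ++ (P1l ++ ([] : List Step)) ++ [Step.d]) := by simp
        rw [he]
        exact Relation.ReflTransGen.refl
      · refine Relation.ReflTransGen.single ?_
        exact ⟨[Step.u] ++ P1l, [], P1r, hr, hne, by simp, by simp⟩
    have step2 := tamari_lift hPQ
    exact step1.trans step2
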